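/- arXiv:1609.00973 — 2 statements merged into one kernel-verified Lean document; each statement's English description precedes it below -/
import Mathlib

section
/- Let f : [0,1] → ℝ be the piecewise linear function f(x) = 1.5x for 0 ≤ x ≤ 1/3, f(x) = 0.5 for 1/3 < x ≤ 2/3, and f(x) = 1.5x − 0.5 for 2/3 < x ≤ 1. If Λ is a Λ-sequence with λ_1 < λ_2, δ satisfies 2/3 < δ < 1, and n ≥ 1, then V_{Λ,δ}(B_nf) > V_{Λ,δ}(f); in particular the Bernstein polynomials do not diminish the restricted Λ-variation V_{Λ,δ}. -/
open Filter Set MeasureTheory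
open scoped ENNReal Topology

/-- `l` is a Λ-sequence (indexed from 0, so `l 0` plays the role of `λ₁`):
a nondecreasing sequence of positive reals whose reciprocals have divergent sum. -/
def IsLambdaSeq (l : ℕ → ℝ) : Prop :=
  Monotone l ∧ (∀ n, 0 < l n) ∧ ¬ Summable (fun n => 1 / l n)

/-- A proper Λ-sequence: additionally `λₙ → ∞`. -/
def IsProperLambdaSeq (l : ℕ → ℝ) : Prop :=
  IsLambdaSeq l ∧ Tendsto l atTop atTop

/-- The Λ-variation of `f` computed over partition points taken from `K`:
the supremum of `∑ⱼ |f(x_{j+1}) - f(x_j)| / λ_{β(j)}` over all `m`, all nondecreasing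
tuples `x₁ ≤ … ≤ x_{m+1}` of points of `K` and all permutations `β` of the gaps. -/
noncomputable def lamVarOn (l : ℕ → ℝ) (f : ℝ → ℝ) (K : Set ℝ) : ℝ≥0∞ :=
  ⨆ (m : ℕ) (x : Fin (m + 1) → ℝ) (_ : Monotone x) (_ : ∀ j, x j ∈ K)
    (β : Equiv.Perm (Fin m)),
    ∑ j : Fin m, ENNReal.ofReal (|f (x j.succ) - f (x j.castSucc)| / l (β j))

/-- The Λ-variation of `f : [0,1] → ℝ`. -/
noncomputable def lamVar (l : ℕ → ℝ) (f : ℝ → ℝ) : ℝ≥0∞ :=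
  lamVarOn l f (Set.Icc 0 1)

/-- The norm `‖f‖_Λ = V_Λ(f) + |f 0|` (valued in `[0,∞]`). -/
noncomputable def lamNorm (l : ℕ → ℝ) (f : ℝ → ℝ) : ℝ≥0∞ :=
  lamVar l f + ENNReal.ofReal |f 0|

/-- `f` is continuous in Λ-variation: `V_{Λ_(m)}(f) → 0` as `m → ∞`. -/
def ContInLamVar (l : ℕ → ℝ) (f : ℝ → ℝ) : Prop :=
  Tendsto (fun m => lamVar (fun n => l (n + m)) f) atTop (𝓝 0)

/-- The restricted Λ-variation `V_{Λ,δ}(f)`: the supremum of `∑ⱼ |f(bⱼ) - f(aⱼ)| / λⱼ`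
over all finite sequences of nonoverlapping closed subintervals `[aⱼ, bⱼ]` of `[0,1]`
of length at most `δ`, listed in any order. -/
noncomputable def lamVarDelta (l : ℕ → ℝ) (δ : ℝ) (f : ℝ → ℝ) : ℝ≥0∞ :=
  ⨆ (k : ℕ) (a : Fin k → ℝ) (b : Fin k → ℝ)
    (_ : ∀ j, 0 ≤ a j ∧ a j ≤ b j ∧ b j ≤ 1 ∧ b j - a j ≤ δ)
    (_ : ∀ i j, i ≠ j → b i ≤ a j ∨ b j ≤ a i),
    ∑ j : Fin k, ENNReal.ofReal (|f (b j) - f (a j)| / l j)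

/-- The `n`-th Bernstein polynomial of `f : [0,1] → ℝ`. -/
noncomputable def bern (n : ℕ) (f : ℝ → ℝ) (x : ℝ) : ℝ :=
  ∑ k ∈ Finset.range (n + 1),
    f ((k : ℝ) / n) * (n.choose k : ℝ) * x ^ k * (1 - x) ^ (n - k)

/-- The `n`-th Kantorovich polynomial of `f : [0,1] → ℝ`. -/
noncomputable def kant (n : ℕ) (f : ℝ → ℝ) (x : ℝ) : ℝ :=
  ∑ k ∈ Finset.range (n + 1),
    (n.choose k : ℝ) * x ^ k * (1 - x) ^ (n - k) *
      ((n + 1) * ∫ t in ((k : ℝ) / (n + 1))..(((k : ℝ) + 1) / (n + 1)), f t)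

/-- The piecewise linear function of the counterexample. -/
noncomputable def fex (x : ℝ) : ℝ :=
  if x ≤ 1 / 3 then 1.5 * x else if x ≤ 2 / 3 then 0.5 else 1.5 * x - 0.5


/-! ### Auxiliary lemmas -/

private lemma fex_zero' : fex 0 = 0 := by norm_num [fex]

private lemma fex_one' : fex 1 = 1 := by norm_num [fex]

private lemma fex_mono' : Monotone fex := by
  intro x y hxy; unfold fex; split_ifs <;> nlinarith

private lemma fex_ge_line' (x : ℝ) : 1.5 * x - 0.5 ≤ fex x := by
  unfold fex; split_ifs <;> nlinarith

private lemma fex_incr_le' {δ a b : ℝ} (hδ : 2/3 < δ) (ha : 0 ≤ a) (hab : a ≤ b) (hb : b ≤ 1)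
    (hlen : b - a ≤ δ) : fex b - fex a ≤ 1.5*δ - 0.5 := by
  unfold fex; split_ifs <;> nlinarith

private lemma sum_incr' (f : ℝ → ℝ) (hf : Monotone f) :
    ∀ (k : ℕ) (a b : Fin k → ℝ) (c : ℝ), c ≤ 1 →
      (∀ j, c ≤ a j ∧ a j ≤ b j ∧ b j ≤ 1) →
      (∀ i j, i ≠ j → b i ≤ a j ∨ b j ≤ a i) →
      ∑ j, (f (b j) - f (a j)) ≤ f 1 - f c := by
  intro k
  induction k with
  | zero =>
    intro a b c hc _ _
    simpa using sub_nonneg.2 (hf hc)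
  | succ k ih =>
    intro a b c hc h hno
    obtain ⟨i, hi⟩ := Finite.exists_min a
    set a' : Fin k → ℝ := fun j => max (a (i.succAbove j)) (b i) with ha'
    set b' : Fin k → ℝ := fun j => max (b (i.succAbove j)) (b i) with hb'
    have hbi1 : b i ≤ 1 := (h i).2.2
    have h' : ∀ j, b i ≤ a' j ∧ a' j ≤ b' j ∧ b' j ≤ 1 := by
      intro j
      exact ⟨le_max_right _ _, max_le_max (h _).2.1 le_rfl, max_le (h _).2.2 hbi1⟩
    have hno' : ∀ j₁ j₂, j₁ ≠ j₂ → b' j₁ ≤ a' j₂ ∨ b' j₂ ≤ a' j₁ := by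
      intro j₁ j₂ hne
      have : i.succAbove j₁ ≠ i.succAbove j₂ := fun h => hne (Fin.succAbove_right_injective h)
      rcases hno _ _ this with h1 | h1
      · exact Or.inl (max_le_max h1 le_rfl)
      · exact Or.inr (max_le_max h1 le_rfl)
    have key := ih a' b' (b i) hbi1 h' hno'
    have heq : ∀ j, f (b' j) - f (a' j) = f (b (i.succAbove j)) - f (a (i.succAbove j)) := by
      intro j
      have hne : i.succAbove j ≠ i := Fin.succAbove_ne i j
      rcases hno _ _ hne with h1 | h1
      · have hle : a (i.succAbove j) ≤ b (i.succAbove j) := (h _).2.1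
        have : a (i.succAbove j) = b (i.succAbove j) :=
          le_antisymm hle (h1.trans (hi _))
        simp [ha', hb', this]
      · have e1 : a' j = a (i.succAbove j) := max_eq_left h1
        have e2 : b' j = b (i.succAbove j) := max_eq_left (h1.trans (h _).2.1)
        rw [e1, e2]
    rw [Fin.sum_univ_succAbove (fun j => f (b j) - f (a j)) i]
    have hsum2 : ∑ j : Fin k, (f (b (i.succAbove j)) - f (a (i.succAbove j))) ≤ f 1 - f (b i) := by
      calc ∑ j : Fin k, (f (b (i.succAbove j)) - f (a (i.succAbove j)))
          = ∑ j : Fin k, (f (b' j) - f (a' j)) :=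
            Finset.sum_congr rfl fun j _ => (heq j).symm
        _ ≤ f 1 - f (b i) := key
    have hfc : f c ≤ f (a i) := hf (h i).1
    linarith

private lemma bern_fex_zero (n : ℕ) : bern n fex 0 = 0 := by
  unfold bern
  apply Finset.sum_eq_zero
  intro k _
  rcases Nat.eq_zero_or_pos k with h | h
  · subst h; simp [fex_zero']
  · simp [zero_pow h.ne']

private lemma bern_fex_one (n : ℕ) (hn : 1 ≤ n) : bern n fex 1 = 1 := by
  unfold bern
  rw [Finset.sum_eq_single n]
  · have : (n : ℝ) ≠ 0 := Nat.cast_ne_zero.2 (by omega)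
    simp [div_self this, fex_one']
  · intro k hk hkn
    have : 0 < n - k := by simp at hk; omega
    simp [zero_pow this.ne']
  · intro h; exact absurd (Finset.self_mem_range_succ n) h

private lemma bern_fex_gt (n : ℕ) (hn : 1 ≤ n) {δ : ℝ} (hδ1 : 2/3 < δ) (hδ2 : δ < 1) :
    1.5 * δ - 0.5 < bern n fex δ := by
  have hδ0 : (0:ℝ) ≤ δ := by linarith
  have h1δ : (0:ℝ) ≤ 1 - δ := by linarith
  have hn0 : (n : ℝ) ≠ 0 := Nat.cast_ne_zero.2 (by omega)
  set w : ℕ → ℝ := fun k => (n.choose k : ℝ) * δ^k * (1-δ)^(n-k) with hw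
  have hwnn : ∀ k, 0 ≤ w k := fun k =>
    mul_nonneg (mul_nonneg (Nat.cast_nonneg _) (pow_nonneg hδ0 _)) (pow_nonneg h1δ _)
  have hsum1 : ∑ k ∈ Finset.range (n+1), w k = 1 := by
    have := congrArg (Polynomial.eval δ) (bernsteinPolynomial.sum ℝ n)
    simpa [hw, bernsteinPolynomial, Polynomial.eval_finset_sum] using this
  have hsum2 : ∑ k ∈ Finset.range (n+1), (k : ℝ) * w k = n * δ := by
    have := congrArg (Polynomial.eval δ) (bernsteinPolynomial.sum_smul ℝ n)
    simpa [hw, bernsteinPolynomial, Polynomial.eval_finset_sum, mul_assoc] using this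
  have hline : ∑ k ∈ Finset.range (n+1), (1.5*((k:ℝ)/n) - 0.5) * w k = 1.5*δ - 0.5 := by
    have : ∑ k ∈ Finset.range (n+1), (1.5*((k:ℝ)/n) - 0.5) * w k
        = (1.5/n) * (∑ k ∈ Finset.range (n+1), (k:ℝ) * w k)
          - 0.5 * (∑ k ∈ Finset.range (n+1), w k) := by
      rw [Finset.mul_sum, Finset.mul_sum, ← Finset.sum_sub_distrib]
      exact Finset.sum_congr rfl fun k _ => by ring
    rw [this, hsum1, hsum2]
    field_simp
  have hbern : bern n fex δ = ∑ k ∈ Finset.range (n+1), fex ((k:ℝ)/n) * w k := by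
    unfold bern
    exact Finset.sum_congr rfl fun k _ => by rw [hw]; ring
  have hdiff : bern n fex δ - (1.5*δ - 0.5)
      = ∑ k ∈ Finset.range (n+1), (fex ((k:ℝ)/n) - (1.5*((k:ℝ)/n) - 0.5)) * w k := by
    rw [hbern, ← hline, ← Finset.sum_sub_distrib]
    exact Finset.sum_congr rfl fun k _ => by ring
  have hpos : 0 < bern n fex δ - (1.5*δ - 0.5) := by
    rw [hdiff]
    apply Finset.sum_pos'
    · intro k _
      exact mul_nonneg (sub_nonneg.2 (fex_ge_line' _)) (hwnn k)
    · refine ⟨0, Finset.mem_range.2 (by omega), ?_⟩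
      have hw0 : w 0 = (1-δ)^n := by simp [hw]
      rw [hw0]
      simp only [Nat.cast_zero, zero_div, fex_zero']
      have hp := pow_pos (show (0:ℝ) < 1 - δ by linarith) n
      nlinarith
  linarith

private lemma bern_fex_le_one (n : ℕ) (hn : 1 ≤ n) {δ : ℝ} (hδ1 : 2/3 < δ) (hδ2 : δ < 1) :
    bern n fex δ ≤ 1 := by
  have hδ0 : (0:ℝ) ≤ δ := by linarith
  have h1δ : (0:ℝ) ≤ 1 - δ := by linarith
  set w : ℕ → ℝ := fun k => (n.choose k : ℝ) * δ^k * (1-δ)^(n-k) with hw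
  have hwnn : ∀ k, 0 ≤ w k := fun k =>
    mul_nonneg (mul_nonneg (Nat.cast_nonneg _) (pow_nonneg hδ0 _)) (pow_nonneg h1δ _)
  have hsum1 : ∑ k ∈ Finset.range (n+1), w k = 1 := by
    have := congrArg (Polynomial.eval δ) (bernsteinPolynomial.sum ℝ n)
    simpa [hw, bernsteinPolynomial, Polynomial.eval_finset_sum] using this
  have hbern : bern n fex δ = ∑ k ∈ Finset.range (n+1), fex ((k:ℝ)/n) * w k := by
    unfold bern
    exact Finset.sum_congr rfl fun k _ => by rw [hw]; ring
  rw [hbern, ← hsum1]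
  apply Finset.sum_le_sum
  intro k hk
  have hk1 : ((k:ℝ)/n) ≤ 1 := by
    rw [div_le_one (by positivity : (0:ℝ) < n)]
    exact_mod_cast Nat.lt_succ_iff.1 (Finset.mem_range.1 hk)
  calc fex ((k:ℝ)/n) * w k ≤ 1 * w k := by
        apply mul_le_mul_of_nonneg_right _ (hwnn k)
        calc fex ((k:ℝ)/n) ≤ fex 1 := fex_mono' hk1
          _ = 1 := fex_one'
    _ = w k := one_mul _

private lemma varDelta_fex_le (l : ℕ → ℝ) (hm : Monotone l) (hp : ∀ n, 0 < l n)
    {δ : ℝ} (hδ1 : 2/3 < δ) (hδ2 : δ < 1) :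
    lamVarDelta l δ fex ≤ ENNReal.ofReal ((1.5*δ-0.5)/l 0 + (1-(1.5*δ-0.5))/l 1) := by
  set M : ℝ := 1.5*δ-0.5 with hM
  have hM0 : 0 < M := by rw [hM]; linarith
  have hM1 : M < 1 := by rw [hM]; linarith
  have hl0 := hp 0
  have hl1 := hp 1
  have hl01 : l 0 ≤ l 1 := hm (by omega)
  refine iSup_le fun k => iSup_le fun a => iSup_le fun b => iSup_le fun h1 =>
    iSup_le fun h2 => ?_
  have hnn : ∀ j : Fin k, 0 ≤ |fex (b j) - fex (a j)| / l (j : ℕ) :=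
    fun j => div_nonneg (abs_nonneg _) (hp _).le
  rw [← ENNReal.ofReal_sum_of_nonneg fun j _ => hnn j]
  apply ENNReal.ofReal_le_ofReal
  have habs : ∀ j : Fin k, |fex (b j) - fex (a j)| = fex (b j) - fex (a j) :=
    fun j => abs_of_nonneg (sub_nonneg.2 (fex_mono' (h1 j).2.1))
  match k with
  | 0 =>
    simp only [Finset.univ_eq_empty, Finset.sum_empty]
    have h01 : (0:ℝ) ≤ M / l 0 := div_nonneg hM0.le hl0.le
    have h02 : (0:ℝ) ≤ (1-M) / l 1 := div_nonneg (by linarith) hl1.le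
    linarith
  | (k+1) =>
    set v : Fin (k+1) → ℝ := fun j => fex (b j) - fex (a j) with hv
    have hvnn : ∀ j, 0 ≤ v j := fun j => sub_nonneg.2 (fex_mono' (h1 j).2.1)
    have hvM : ∀ j, v j ≤ M := fun j =>
      fex_incr_le' hδ1 (h1 j).1 (h1 j).2.1 (h1 j).2.2.1 (h1 j).2.2.2
    have hvsum : ∑ j, v j ≤ 1 := by
      have := sum_incr' fex fex_mono' (k+1) a b 0 (by norm_num)
        (fun j => ⟨(h1 j).1, (h1 j).2.1, (h1 j).2.2.1⟩) h2
      rwa [fex_one', fex_zero', sub_zero] at this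
    calc ∑ j : Fin (k+1), |fex (b j) - fex (a j)| / l (j:ℕ)
        = ∑ j : Fin (k+1), v j / l (j:ℕ) :=
          Finset.sum_congr rfl fun j _ => by rw [habs j]
      _ = v 0 / l 0 + ∑ j : Fin k, v j.succ / l (j.succ : ℕ) := by
          rw [Fin.sum_univ_succ]
          norm_num
      _ ≤ v 0 / l 0 + ∑ j : Fin k, v j.succ / l 1 := by
          refine add_le_add le_rfl (Finset.sum_le_sum fun j _ => ?_)
          exact div_le_div_of_nonneg_left (hvnn _) hl1
            (hm (by rw [Fin.val_succ]; omega))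
      _ = v 0 / l 0 + (∑ j : Fin k, v j.succ) / l 1 := by rw [Finset.sum_div]
      _ ≤ M / l 0 + (1-M) / l 1 := by
          set S : ℝ := ∑ j : Fin k, v j.succ with hS
          have hSnn : 0 ≤ S := Finset.sum_nonneg fun j _ => hvnn _
          have hStot : v 0 + S ≤ 1 := by
            rw [hS]
            have := hvsum
            rw [Fin.sum_univ_succ] at this
            linarith
          rw [div_add_div _ _ (ne_of_gt hl0) (ne_of_gt hl1),
              div_add_div _ _ (ne_of_gt hl0) (ne_of_gt hl1),
              div_le_div_iff₀ (mul_pos hl0 hl1) (mul_pos hl0 hl1)]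
          nlinarith [mul_nonneg (sub_nonneg.2 (hvM 0)) (sub_nonneg.2 hl01),
            mul_nonneg (sub_nonneg.2 hStot) hl0.le, mul_pos hl0 hl1]

private lemma varDelta_ge (l : ℕ → ℝ) (g : ℝ → ℝ) {δ : ℝ} (hδ1 : 2/3 < δ) (hδ2 : δ < 1)
    (hg0 : g 0 = 0) (hg1 : g 1 = 1) (ht0 : 0 ≤ g δ) (ht1 : g δ ≤ 1) :
    ENNReal.ofReal (g δ / l 0) + ENNReal.ofReal ((1 - g δ) / l 1)
      ≤ lamVarDelta l δ g := by
  set a : Fin 2 → ℝ := ![0, δ] with ha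
  set b : Fin 2 → ℝ := ![δ, 1] with hb
  have h1 : ∀ j, 0 ≤ a j ∧ a j ≤ b j ∧ b j ≤ 1 ∧ b j - a j ≤ δ := by
    intro j
    fin_cases j <;> refine ⟨?_, ?_, ?_, ?_⟩ <;> simp [ha, hb] <;> linarith
  have h2 : ∀ i j, i ≠ j → b i ≤ a j ∨ b j ≤ a i := by
    intro i j hij
    fin_cases i <;> fin_cases j <;> first
      | exact absurd rfl hij
      | (left; simp [ha, hb]; done)
      | (right; simp [ha, hb]; done)
  refine le_trans ?_ (le_iSup_of_le 2 (le_iSup_of_le a (le_iSup_of_le b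
    (le_iSup_of_le h1 (le_iSup_of_le h2 le_rfl)))))
  rw [Fin.sum_univ_two]
  have e0 : |g (b 0) - g (a 0)| = g δ := by
    simp [ha, hb, hg0, abs_of_nonneg ht0]
  have e1 : |g (b 1) - g (a 1)| = 1 - g δ := by
    simp only [ha, hb]
    simp [hg1, abs_of_nonneg (by linarith : (0:ℝ) ≤ 1 - g δ)]
  rw [show ((0 : Fin 2) : ℕ) = 0 from rfl, show ((1 : Fin 2) : ℕ) = 1 from rfl, e0, e1]

/-- If `Λ` is a Λ-sequence with `λ₁ < λ₂`, `2/3 < δ < 1` and `n ≥ 1`, then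
`V_{Λ,δ}(B_n f) > V_{Λ,δ}(f)`: the Bernstein polynomials do not diminish `V_{Λ,δ}`. -/
theorem bernstein_not_diminish_lamVarDelta (l : ℕ → ℝ) (hl : IsLambdaSeq l)
    (hl12 : l 0 < l 1) (δ : ℝ) (hδ1 : 2 / 3 < δ) (hδ2 : δ < 1) (n : ℕ) (hn : 1 ≤ n) :
    lamVarDelta l δ (bern n fex) > lamVarDelta l δ fex := by
  obtain ⟨hm, hp, -⟩ := hl
  have hl0 := hp 0
  have hl1 := hp 1
  set M : ℝ := 1.5*δ-0.5 with hM
  set t : ℝ := bern n fex δ with hteq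
  have hMt : M < t := bern_fex_gt n hn hδ1 hδ2
  have hM0 : 0 < M := by rw [hM]; linarith
  have ht0 : 0 ≤ t := le_of_lt (hM0.trans hMt)
  have ht1 : t ≤ 1 := bern_fex_le_one n hn hδ1 hδ2
  have upper : lamVarDelta l δ fex ≤ ENNReal.ofReal (M/l 0 + (1-M)/l 1) :=
    varDelta_fex_le l hm hp hδ1 hδ2
  have lower : ENNReal.ofReal (t / l 0) + ENNReal.ofReal ((1 - t) / l 1)
      ≤ lamVarDelta l δ (bern n fex) :=
    varDelta_ge l (bern n fex) hδ1 hδ2 (bern_fex_zero n) (bern_fex_one n hn) ht0 ht1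
  have strict : ENNReal.ofReal (M/l 0 + (1-M)/l 1)
      < ENNReal.ofReal (t / l 0) + ENNReal.ofReal ((1 - t) / l 1) := by
    rw [← ENNReal.ofReal_add (div_nonneg ht0 hl0.le) (div_nonneg (by linarith) hl1.le)]
    apply (ENNReal.ofReal_lt_ofReal_iff ?_).2
    · rw [div_add_div _ _ (ne_of_gt hl0) (ne_of_gt hl1),
          div_add_div _ _ (ne_of_gt hl0) (ne_of_gt hl1),
          div_lt_div_iff₀ (mul_pos hl0 hl1) (mul_pos hl0 hl1)]
      nlinarith [mul_pos (mul_pos (sub_pos.2 hMt) (sub_pos.2 hl12)) (mul_pos hl0 hl1)]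
    · have h1 : 0 < t / l 0 := div_pos (by linarith) hl0
      have h2 : 0 ≤ (1-t) / l 1 := div_nonneg (by linarith) hl1.le
      linarith
  exact lt_of_le_of_lt upper (lt_of_lt_of_le strict lower)
end

section
/- Let Λ be a Λ-sequence. A continuous function f : [0,1] → ℝ is of bounded Λ-variation if and only if sup_{n≥1} ‖B_nf‖_Λ < ∞; that is, the continuous functions of bounded Λ-variation are exactly the continuous functions whose Bernstein polynomials have uniformly bounded ‖·‖_Λ norms. -/
open Filter Set MeasureTheory
open scoped ENNReal Topology

section BernsteinLamVarAux

private lemma pi_fiber_eq' {n M : ℕ} (A : Finset (Fin M)) (S : Finset (Fin n)) :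
    Finset.univ.filter
      (fun σ : Fin n → Fin M => Finset.univ.filter (fun i => σ i ∈ A) = S)
      = Fintype.piFinset (fun i => if i ∈ S then A else Aᶜ) := by
  ext σ
  simp only [Finset.mem_filter, Finset.mem_univ, true_and, Fintype.mem_piFinset]
  constructor
  · intro h i
    by_cases hi : i ∈ S
    · rw [if_pos hi]
      rw [← h] at hi
      exact (Finset.mem_filter.mp hi).2
    · rw [if_neg hi, Finset.mem_compl]
      intro hA
      exact hi (by rw [← h]; exact Finset.mem_filter.mpr ⟨Finset.mem_univ _, hA⟩)
  · intro h
    ext i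
    simp only [Finset.mem_filter, Finset.mem_univ, true_and]
    constructor
    · intro hA
      by_contra hi
      have h2 := h i
      rw [if_neg hi, Finset.mem_compl] at h2
      exact h2 hA
    · intro hi
      have h2 := h i
      rw [if_pos hi] at h2
      exact h2

private lemma sum_pi_weight' (n M : ℕ) (p : Fin M → ℝ) (A : Finset (Fin M)) (g : ℕ → ℝ) :
    ∑ σ : Fin n → Fin M,
        (∏ i, p (σ i)) * g ((Finset.univ.filter fun i => σ i ∈ A).card)
      = ∑ k ∈ Finset.range (n + 1),
          g k * ((n.choose k : ℝ) * (∑ t ∈ A, p t) ^ k * (∑ t ∈ Aᶜ, p t) ^ (n - k)) := by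
  classical
  rw [← Finset.sum_fiberwise Finset.univ
      (fun σ : Fin n → Fin M => Finset.univ.filter (fun i => σ i ∈ A)) _]
  have step1 : ∀ S : Finset (Fin n),
      (∑ σ ∈ Finset.univ.filter
        (fun σ : Fin n → Fin M => Finset.univ.filter (fun i => σ i ∈ A) = S),
        (∏ i, p (σ i)) * g ((Finset.univ.filter fun i => σ i ∈ A).card))
      = g S.card * ((∑ t ∈ A, p t) ^ S.card * (∑ t ∈ Aᶜ, p t) ^ (n - S.card)) := by
    intro S
    rw [Finset.sum_congr rfl (fun σ hσ => by
      rw [(Finset.mem_filter.mp hσ).2]), ← Finset.sum_mul, pi_fiber_eq',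
      ← Finset.prod_univ_sum]
    rw [mul_comm]
    congr 1
    calc (∏ i : Fin n, ∑ t ∈ (if i ∈ S then A else Aᶜ), p t)
        = ∏ i : Fin n, (if i ∈ S then (∑ t ∈ A, p t) else (∑ t ∈ Aᶜ, p t)) := by
          apply Finset.prod_congr rfl; intro i _; split <;> rfl
      _ = _ := by
          rw [Finset.prod_ite, Finset.prod_const, Finset.prod_const]
          congr 2
          · simp
          · rw [show (Finset.univ.filter (fun i => ¬ i ∈ S)).card = n - S.card by
              rw [Finset.filter_not, Finset.filter_mem_eq_inter, Finset.univ_inter,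
                Finset.card_sdiff_of_subset (Finset.subset_univ S), Finset.card_univ, Fintype.card_fin]]
  rw [Finset.sum_congr rfl (fun S _ => step1 S)]
  rw [show (Finset.univ : Finset (Finset (Fin n))) = (Finset.univ : Finset (Fin n)).powerset by
    rw [Finset.powerset_univ]]
  rw [Finset.sum_powerset_apply_card
    (fun k => g k * ((∑ t ∈ A, p t) ^ k * (∑ t ∈ Aᶜ, p t) ^ (n - k)))]
  simp only [Finset.card_univ, Fintype.card_fin, nsmul_eq_mul]
  exact Finset.sum_congr rfl fun k _ => by ring

private lemma sum_fin_filter_le' {M : ℕ} (P : ℕ → ℝ) (c : ℕ) (hc : c < M) :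
    ∑ t ∈ Finset.univ.filter (fun t : Fin M => (t : ℕ) ≤ c), P (t : ℕ)
      = ∑ t ∈ Finset.range (c + 1), P t := by
  rw [Finset.sum_filter, Fin.sum_univ_eq_sum_range (fun t => if t ≤ c then P t else 0) M,
    ← Finset.sum_filter]
  congr 1
  ext t
  simp only [Finset.mem_filter, Finset.mem_range, Nat.lt_succ_iff]
  omega

private lemma bern_partition_le' (l : ℕ → ℝ) (hl : ∀ k, 0 < l k) (f : ℝ → ℝ)
    (hfin : lamVar l f ≠ ⊤) {n : ℕ} (hn : 1 ≤ n)
    (m : ℕ) (x : Fin (m + 1) → ℝ) (hmono : Monotone x)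
    (hmem : ∀ j, x j ∈ Set.Icc (0:ℝ) 1) (β : Equiv.Perm (Fin m)) :
    ∑ j : Fin m, ENNReal.ofReal (|bern n f (x j.succ) - bern n f (x j.castSucc)| / l (β j))
      ≤ lamVar l f := by
  classical
  have hn' : (0:ℝ) < n := by exact_mod_cast hn
  set M : ℝ := (lamVar l f).toReal with hM
  set x' : ℕ → ℝ := fun t => if h : t < m + 1 then x ⟨t, h⟩ else 1 with hx'
  set Y : ℕ → ℝ := fun t => if t = 0 then 0 else x' (t - 1) with hY
  set p : Fin (m + 2) → ℝ := fun t => Y ((t : ℕ) + 1) - Y (t : ℕ) with hp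
  set A : Fin (m + 1) → Finset (Fin (m + 2)) :=
    fun j => Finset.univ.filter (fun t : Fin (m + 2) => (t : ℕ) ≤ (j : ℕ)) with hA
  set N : (Fin n → Fin (m + 2)) → Fin (m + 1) → ℕ :=
    fun σ j => (Finset.univ.filter (fun i => σ i ∈ A j)).card with hN
  set w : (Fin n → Fin (m + 2)) → ℝ := fun σ => ∏ i, p (σ i) with hw
  set y : (Fin n → Fin (m + 2)) → Fin (m + 1) → ℝ := fun σ j => (N σ j : ℝ) / n with hy
  have hx'mono : Monotone x' := by
    intro s t hst
    by_cases ht : t < m + 1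
    · have hs : s < m + 1 := lt_of_le_of_lt hst ht
      simp only [hx', dif_pos ht, dif_pos hs]
      exact hmono (Fin.mk_le_mk.mpr hst)
    · simp only [hx', dif_neg ht]
      by_cases hs : s < m + 1
      · simp only [dif_pos hs]; exact (hmem _).2
      · simp only [dif_neg hs]; exact le_refl 1
  have hx'nonneg : ∀ t, 0 ≤ x' t := by
    intro t
    by_cases h : t < m + 1
    · simp only [hx', dif_pos h]; exact (hmem _).1
    · simp only [hx', dif_neg h]; norm_num
  have hYmono : Monotone Y := by
    intro s t hst
    by_cases hs : s = 0
    · subst hs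
      by_cases ht : t = 0
      · subst ht; exact le_refl _
      · simp only [hY, if_pos rfl, if_neg ht]; exact hx'nonneg _
    · have ht : t ≠ 0 := by omega
      simp only [hY, if_neg hs, if_neg ht]
      exact hx'mono (by omega)
  have hY0 : Y 0 = 0 := by simp [hY]
  have hYs : ∀ t, Y (t + 1) = x' t := by intro t; simp [hY]
  have hp0 : ∀ t : Fin (m + 2), 0 ≤ p t := fun t =>
    sub_nonneg.mpr (hYmono (Nat.le_succ _))
  have hq : ∀ j : Fin (m + 1), ∑ t ∈ A j, p t = x j := by
    intro j
    have h0 := sum_fin_filter_le' (M := m + 2) (fun t => Y (t + 1) - Y t) (j : ℕ)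
      (by omega)
    rw [hA]
    rw [show (∑ t ∈ Finset.univ.filter (fun t : Fin (m + 2) => (t : ℕ) ≤ (j : ℕ)), p t)
        = ∑ t ∈ Finset.univ.filter (fun t : Fin (m + 2) => (t : ℕ) ≤ (j : ℕ)),
            (fun t : ℕ => Y (t + 1) - Y t) (t : ℕ) from rfl, h0,
      Finset.sum_range_sub Y ((j : ℕ) + 1)]
    rw [hY0, hYs, sub_zero, hx']
    simp only [dif_pos j.isLt, Fin.eta]
  have htot : ∑ t : Fin (m + 2), p t = 1 := by
    rw [show (∑ t : Fin (m + 2), p t)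
        = ∑ t ∈ Finset.range (m + 2), (Y (t + 1) - Y t) from
          Fin.sum_univ_eq_sum_range (fun t => Y (t + 1) - Y t) (m + 2),
      Finset.sum_range_sub Y (m + 2)]
    rw [hY0, sub_zero, show m + 2 = (m+1) + 1 from rfl, hYs, hx']
    exact dif_neg (by omega)
  have hr : ∀ j : Fin (m + 1), ∑ t ∈ (A j)ᶜ, p t = 1 - x j := by
    intro j
    have := Finset.sum_compl_add_sum (A j) p
    rw [hq j, htot] at this
    linarith
  have hw0 : ∀ σ, 0 ≤ w σ := fun σ => Finset.prod_nonneg fun i _ => hp0 _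
  have hw1 : ∑ σ : Fin n → Fin (m + 2), w σ = 1 := by
    have h1 := Finset.prod_univ_sum (fun _ : Fin n => (Finset.univ : Finset (Fin (m + 2))))
      (fun _ t => p t)
    rw [Fintype.piFinset_univ] at h1
    rw [hw, ← h1]
    simp [htot]
  have key : ∀ j : Fin (m + 1),
      bern n f (x j) = ∑ σ : Fin n → Fin (m + 2), w σ * f ((N σ j : ℝ) / n) := by
    intro j
    have h2 := sum_pi_weight' n (m + 2) p (A j) (fun k => f ((k : ℝ) / n))
    rw [hq j, hr j] at h2
    rw [show (∑ σ : Fin n → Fin (m + 2), w σ * f ((N σ j : ℝ) / n))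
        = ∑ σ : Fin n → Fin (m + 2),
            (∏ i, p (σ i)) * (fun k : ℕ => f ((k : ℝ) / n))
              ((Finset.univ.filter fun i => σ i ∈ A j).card) from rfl, h2, bern]
    exact Finset.sum_congr rfl fun k _ => by ring
  have hNmono : ∀ σ, Monotone (N σ) := by
    intro σ j j' hjj'
    apply Finset.card_le_card
    apply Finset.monotone_filter_right
    intro i _ hi
    simp only [hA, Finset.mem_filter, Finset.mem_univ, true_and] at hi ⊢
    exact le_trans hi hjj'
  have hNle : ∀ σ j, N σ j ≤ n := fun σ j =>
    le_trans (Finset.card_filter_le _ _) (by simp)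
  have hymono : ∀ σ, Monotone (y σ) := by
    intro σ j j' h
    simp only [hy]
    exact (div_le_div_iff_of_pos_right hn').mpr (by exact_mod_cast hNmono σ h)
  have hymem : ∀ σ j, y σ j ∈ Set.Icc (0:ℝ) 1 := by
    intro σ j
    constructor
    · positivity
    · rw [div_le_one hn']
      exact_mod_cast hNle σ j
  have hS : ∀ σ, (∑ j : Fin m, |f (y σ j.succ) - f (y σ j.castSucc)| / l (β j)) ≤ M := by
    intro σ
    have h1 : ENNReal.ofReal
        (∑ j : Fin m, |f (y σ j.succ) - f (y σ j.castSucc)| / l (β j)) ≤ lamVar l f := by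
      rw [ENNReal.ofReal_sum_of_nonneg
        (fun j _ => div_nonneg (abs_nonneg _) (hl _).le)]
      exact le_iSup_of_le m (le_iSup_of_le (y σ) (le_iSup_of_le (hymono σ)
        (le_iSup_of_le (fun j => hymem σ j) (le_iSup_of_le β le_rfl))))
    exact (ENNReal.ofReal_le_iff_le_toReal hfin).mp h1
  have hreal : (∑ j : Fin m, |bern n f (x j.succ) - bern n f (x j.castSucc)| / l (β j)) ≤ M := by
    have hstep : ∀ j : Fin m,
        |bern n f (x j.succ) - bern n f (x j.castSucc)| / l (β j)
          ≤ ∑ σ : Fin n → Fin (m + 2),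
              w σ * (|f (y σ j.succ) - f (y σ j.castSucc)| / l (β j)) := by
      intro j
      have habs : |bern n f (x j.succ) - bern n f (x j.castSucc)|
          ≤ ∑ σ : Fin n → Fin (m + 2), w σ * |f (y σ j.succ) - f (y σ j.castSucc)| := by
        rw [key j.succ, key j.castSucc, ← Finset.sum_sub_distrib]
        refine le_trans (Finset.abs_sum_le_sum_abs _ _) ?_
        apply Finset.sum_le_sum
        intro σ _
        rw [← mul_sub, abs_mul, abs_of_nonneg (hw0 σ)]
      calc |bern n f (x j.succ) - bern n f (x j.castSucc)| / l (β j)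
          ≤ (∑ σ : Fin n → Fin (m + 2),
              w σ * |f (y σ j.succ) - f (y σ j.castSucc)|) / l (β j) :=
            (div_le_div_iff_of_pos_right (hl _)).mpr habs
        _ = _ := by
            rw [Finset.sum_div]
            exact Finset.sum_congr rfl fun σ _ => by rw [mul_div_assoc]
    calc (∑ j : Fin m, |bern n f (x j.succ) - bern n f (x j.castSucc)| / l (β j))
        ≤ ∑ j : Fin m, ∑ σ : Fin n → Fin (m + 2),
            w σ * (|f (y σ j.succ) - f (y σ j.castSucc)| / l (β j)) :=
          Finset.sum_le_sum fun j _ => hstep j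
      _ = ∑ σ : Fin n → Fin (m + 2), w σ *
            (∑ j : Fin m, |f (y σ j.succ) - f (y σ j.castSucc)| / l (β j)) := by
          rw [Finset.sum_comm]
          exact Finset.sum_congr rfl fun σ _ => by rw [Finset.mul_sum]
      _ ≤ ∑ σ : Fin n → Fin (m + 2), w σ * M :=
          Finset.sum_le_sum fun σ _ => mul_le_mul_of_nonneg_left (hS σ) (hw0 σ)
      _ = M := by rw [← Finset.sum_mul, hw1, one_mul]
  calc (∑ j : Fin m,
        ENNReal.ofReal (|bern n f (x j.succ) - bern n f (x j.castSucc)| / l (β j)))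
      = ENNReal.ofReal
          (∑ j : Fin m, |bern n f (x j.succ) - bern n f (x j.castSucc)| / l (β j)) :=
        (ENNReal.ofReal_sum_of_nonneg fun j _ => div_nonneg (abs_nonneg _) (hl _).le).symm
    _ ≤ ENNReal.ofReal M := ENNReal.ofReal_le_ofReal hreal
    _ ≤ lamVar l f := ENNReal.ofReal_toReal_le

private lemma bern_zero' (n : ℕ) (f : ℝ → ℝ) (hn : 1 ≤ n) : bern n f 0 = f 0 := by
  rw [bern, Finset.sum_eq_single 0]
  · norm_num
  · intro k hk hkne
    rw [zero_pow hkne]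
    ring
  · intro h
    exact absurd (Finset.mem_range.mpr (by omega)) h

private lemma bern_tendsto' (f : ℝ → ℝ) (hc : ContinuousOn f (Set.Icc 0 1)) {x : ℝ}
    (hx : x ∈ Set.Icc (0:ℝ) 1) :
    Tendsto (fun n => bern n f x) atTop (𝓝 (f x)) := by
  let F : C(unitInterval, ℝ) := ⟨(Set.Icc (0:ℝ) 1).restrict f, hc.restrict⟩
  have heq : ∀ n, ∀ x' : unitInterval, bernsteinApproximation n F x' = bern n f x' := by
    intro n x'
    rw [bernsteinApproximation.apply]
    have h1 : ∀ k : Fin (n + 1), bernstein n k x' • F (bernstein.z k)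
        = f ((k : ℕ) / n) * (n.choose (k : ℕ) : ℝ) * (x' : ℝ) ^ (k : ℕ)
            * (1 - (x' : ℝ)) ^ (n - (k : ℕ)) := by
      intro k
      rw [smul_eq_mul, mul_comm, bernstein_apply]
      have hz : ((bernstein.z k : unitInterval) : ℝ) = (k : ℝ) / n := rfl
      show f ((bernstein.z k : unitInterval) : ℝ) * _ = _
      rw [hz]
      ring
    rw [Finset.sum_congr rfl (fun k _ => h1 k), Fin.sum_univ_eq_sum_range
      (fun k => f ((k : ℝ) / n) * (n.choose k : ℝ) * (x' : ℝ) ^ k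
        * (1 - (x' : ℝ)) ^ (n - k)) (n + 1)]
    rfl
  have hconv := bernsteinApproximation_uniform F
  have hpt : Tendsto (fun n => bernsteinApproximation n F (⟨x, hx⟩ : unitInterval))
      atTop (𝓝 (F ⟨x, hx⟩)) :=
    ((continuous_eval_const (⟨x, hx⟩ : unitInterval)).tendsto F).comp hconv
  have heq2 : (fun n => bernsteinApproximation n F (⟨x, hx⟩ : unitInterval))
      = fun n => bern n f x := by
    funext n; exact heq n _
  rw [heq2] at hpt
  exact hpt

end BernsteinLamVarAux

/-- A continuous `f : [0,1] → ℝ` is of bounded Λ-variation if and only if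
`sup_{n ≥ 1} ‖B_n f‖_Λ < ∞`. -/
theorem continuous_lamBV_iff_bernstein_bounded (l : ℕ → ℝ) (hl : IsLambdaSeq l)
    (f : ℝ → ℝ) (hc : ContinuousOn f (Set.Icc 0 1)) :
    lamVar l f < ⊤ ↔ (⨆ (n : ℕ) (_ : 1 ≤ n), lamNorm l (bern n f)) < ⊤ := by
  obtain ⟨hlm, hlp, hls⟩ := hl
  constructor
  · intro h
    have hb : (⨆ (n : ℕ) (_ : 1 ≤ n), lamNorm l (bern n f))
        ≤ lamVar l f + ENNReal.ofReal |f 0| := by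
      refine iSup_le fun n => iSup_le fun hn => ?_
      rw [lamNorm, bern_zero' n f hn]
      refine add_le_add ?_ le_rfl
      rw [lamVar, lamVarOn]
      refine iSup_le fun m => iSup_le fun x => iSup_le fun hmono => iSup_le fun hmem =>
        iSup_le fun β => ?_
      exact bern_partition_le' l hlp f h.ne hn m x hmono hmem β
    exact lt_of_le_of_lt hb (ENNReal.add_lt_top.mpr ⟨h, ENNReal.ofReal_lt_top⟩)
  · intro h
    set C := ⨆ (n : ℕ) (_ : 1 ≤ n), lamNorm l (bern n f) with hCdef
    have hv : lamVar l f ≤ C := by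
      rw [lamVar, lamVarOn]
      refine iSup_le fun m => iSup_le fun x => iSup_le fun hmono => iSup_le fun hmem =>
        iSup_le fun β => ?_
      have hCn : ∀ n : ℕ, 1 ≤ n →
          (∑ j : Fin m, |bern n f (x j.succ) - bern n f (x j.castSucc)| / l (β j))
            ≤ C.toReal := by
        intro n hn
        have h1 : ENNReal.ofReal
            (∑ j : Fin m, |bern n f (x j.succ) - bern n f (x j.castSucc)| / l (β j)) ≤ C := by
          rw [ENNReal.ofReal_sum_of_nonneg
            (fun j _ => div_nonneg (abs_nonneg _) (hlp _).le)]
          calc (∑ j : Fin m,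
                ENNReal.ofReal (|bern n f (x j.succ) - bern n f (x j.castSucc)| / l (β j)))
              ≤ lamVar l (bern n f) := by
                rw [lamVar, lamVarOn]
                exact le_iSup_of_le m (le_iSup_of_le x (le_iSup_of_le hmono
                  (le_iSup_of_le hmem (le_iSup_of_le β le_rfl))))
            _ ≤ lamNorm l (bern n f) := le_self_add
            _ ≤ C := le_iSup_of_le n (le_iSup_of_le hn le_rfl)
        exact (ENNReal.ofReal_le_iff_le_toReal h.ne).mp h1
      have hlim : Tendsto
          (fun n => ∑ j : Fin m, |bern n f (x j.succ) - bern n f (x j.castSucc)| / l (β j))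
          atTop (𝓝 (∑ j : Fin m, |f (x j.succ) - f (x j.castSucc)| / l (β j))) := by
        apply tendsto_finset_sum
        intro j _
        exact (((bern_tendsto' f hc (hmem j.succ)).sub
          (bern_tendsto' f hc (hmem j.castSucc))).abs).div_const _
      have hle : (∑ j : Fin m, |f (x j.succ) - f (x j.castSucc)| / l (β j)) ≤ C.toReal :=
        le_of_tendsto hlim (Filter.eventually_atTop.mpr ⟨1, fun n hn => hCn n hn⟩)
      calc (∑ j : Fin m, ENNReal.ofReal (|f (x j.succ) - f (x j.castSucc)| / l (β j)))
          = ENNReal.ofReal (∑ j : Fin m, |f (x j.succ) - f (x j.castSucc)| / l (β j)) :=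
            (ENNReal.ofReal_sum_of_nonneg
              (fun j _ => div_nonneg (abs_nonneg _) (hlp _).le)).symm
        _ ≤ ENNReal.ofReal C.toReal := ENNReal.ofReal_le_ofReal hle
        _ ≤ C := ENNReal.ofReal_toReal_le
    exact lt_of_le_of_lt hv h
end
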